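/- (Inductive Hamming partition) Suppose the 2k-bit Hamming matrix P (size 2k × (2^(2k)−1)) admits a partition P = [A B C] into three 2k × n blocks (n = (2^(2k)−1)/3) with A + B + C = 0 and such that the stacked matrix [A; B] is full rank. Then the 2(k+1)-bit Hamming matrix admits a partition [A₊ B₊ C₊] into three 2(k+1) × n₊ blocks (n₊ = (2^(2(k+1))−1)/3 = 4n + 1) with A₊ + B₊ + C₊ = 0 and [A₊; B₊] full rank. -/

import Mathlib

private def uu : Fin 2 → ZMod 2 := ![1,0]
private def vv : Fin 2 → ZMod 2 := ![0,1]
private def ww : Fin 2 → ZMod 2 := ![1,1]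

private def Tt : Fin 3 → Fin 4 → Fin 3 := ![![0,1,1,2], ![1,0,2,1], ![2,2,0,0]]

private def tg : Fin 3 → Fin 4 → Fin 2 → ZMod 2 :=
  ![![0, 0, vv, 0], ![uu, vv, ww, ww], ![uu, vv, uu, ww]]

private def etg : Fin 3 → Fin 2 → ZMod 2 := ![uu, vv, ww]

private lemma TtgInj : ∀ i s i' s', Tt i s = Tt i' s' → tg i s = tg i' s' →
    i = i' ∧ s = s' := by decide

private lemma etgInj : ∀ i i' : Fin 3, etg i = etg i' → i = i' := by decide

private lemma etgNe : ∀ i, etg i ≠ 0 := by decide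

private lemma tgSum : ∀ s r, tg 0 s r + tg 1 s r + tg 2 s r = 0 := by decide

private lemma etgSum : ∀ r, etg 0 r + etg 1 r + etg 2 r = 0 := by decide

private lemma tagSpan : ∀ α β : Fin 2 → ZMod 2,
    (∀ s, dotProduct α (tg 0 s) + dotProduct β (tg 1 s) = 0) →
    dotProduct α (etg 0) + dotProduct β (etg 1) = 0 → α = 0 ∧ β = 0 := by
  decide

private lemma keySolve : ∀ (cv cv' : Fin 3 → ZMod 2) (c : Fin 4 → ZMod 2),
    cv 2 = cv 0 + cv 1 → cv' 2 = cv' 0 + cv' 1 →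
    (∀ s, cv (Tt 0 s) + cv' (Tt 1 s) + c s = 0) →
    (∀ i, cv i = ![c 0 + c 1 + c 2, c 0 + c 3, c 1 + c 2 + c 3] i) ∧
    (∀ i, cv' i = ![c 0 + c 1 + c 3, c 1 + c 2, c 0 + c 2 + c 3] i) := by decide

private lemma TtPermSum {M : Type*} [AddCommMonoid M] (x : Fin 3 → M) :
    ∀ s, x (Tt 0 s) + x (Tt 1 s) + x (Tt 2 s) = x 0 + x 1 + x 2 := by
  intro s
  fin_cases s <;> simp [Tt] <;> abel

private lemma zmodNe0 : ∀ a : ZMod 2, a ≠ 0 → a = 1 := by decide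
private lemma zmodNe1 : ∀ a : ZMod 2, a ≠ 1 → a = 0 := by decide
private lemma zmodSolve3 : ∀ a b c : ZMod 2, a + b + c = 0 → c = a + b := by decide

open Matrix in
private lemma auxSurj {m₁ n₁ : Type*} [Fintype m₁] [Fintype n₁] [DecidableEq m₁]
    [DecidableEq n₁] (M : Matrix m₁ n₁ (ZMod 2))
    (h : ∀ g, Matrix.vecMul g M = 0 → g = 0) :
    Function.Surjective M.mulVec := by
  have hinj : Function.Injective M.vecMul := by
    intro g1 g2 hg
    have h2 := h (g1 - g2)
      (by simp only [Matrix.sub_vecMul]; simp only at hg; rw [hg, sub_self])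
    rwa [sub_eq_zero] at h2
  have hinj' : Function.Injective M.vecMulLinear := by
    rwa [Matrix.coe_vecMulLinear]
  have hr : M.rank = Fintype.card m₁ := by
    rw [← Matrix.rank_transpose, Matrix.rank, Matrix.mulVecLin_transpose,
      LinearMap.finrank_range_of_inj hinj', Module.finrank_pi]
  have htop : LinearMap.range M.mulVecLin = ⊤ := by
    apply Submodule.eq_top_of_finrank_eq
    rw [← Matrix.rank, hr, Module.finrank_pi]
  have := LinearMap.range_eq_top.mp htop
  convert this using 1
  ext; simp [Matrix.mulVecLin_apply]

open Matrix Finset in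
private lemma countLemma {k n : ℕ} (hn : 3 * n + 1 = 2 ^ (2 * k)) (hn1 : n ≠ 1)
    (col : Fin 3 × Fin n → (Fin (2 * k) → ZMod 2))
    (hinj : Function.Injective col) (hne : ∀ p, col p ≠ 0)
    (r : Fin (2 * k) → ZMod 2) (lam : Fin 3 → ZMod 2)
    (h : ∀ p, r ⬝ᵥ col p = lam p.1) : r = 0 := by
  by_contra hr
  obtain ⟨t0, ht0⟩ := Function.ne_iff.mp hr
  simp only [Pi.zero_apply] at ht0
  have ht0' : r t0 = 1 := zmodNe0 _ ht0
  have hsurj : ∀ x : Fin (2 * k) → ZMod 2, x ≠ 0 → ∃ p, col p = x := by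
    set col' : Fin 3 × Fin n → {x : Fin (2 * k) → ZMod 2 // x ≠ 0} :=
      fun p => ⟨col p, hne p⟩ with hcol'
    have hinj' : Function.Injective col' := by
      intro p q hpq
      exact hinj (congrArg Subtype.val hpq)
    have hcard : Fintype.card (Fin 3 × Fin n) =
        Fintype.card {x : Fin (2 * k) → ZMod 2 // x ≠ 0} := by
      have h1 : Fintype.card {x : Fin (2 * k) → ZMod 2 // x ≠ 0} =
          Fintype.card (Fin (2 * k) → ZMod 2) - 1 := by
        simp [Fintype.card_subtype_compl, Fintype.card_subtype_eq]
      rw [h1, Fintype.card_prod, Fintype.card_fin, Fintype.card_fin,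
        Fintype.card_fun, Fintype.card_fin, ZMod.card]
      omega
    have hbij := (Fintype.bijective_iff_injective_and_card col').mpr ⟨hinj', hcard⟩
    intro x hx
    obtain ⟨p, hp⟩ := hbij.2 ⟨x, hx⟩
    exact ⟨p, congrArg Subtype.val hp⟩
  set e : Fin (2 * k) → ZMod 2 := Pi.single t0 1 with he
  have hee : e + e = 0 := by
    ext t
    simp only [Pi.add_apply, Pi.zero_apply, he, Pi.single_apply]
    split <;> decide
  have hflip : ∀ x : Fin (2 * k) → ZMod 2, r ⬝ᵥ (x + e) = r ⬝ᵥ x + 1 := by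
    intro x
    rw [dotProduct_add, he, dotProduct_single, ht0', mul_one]
  set S1 : Finset (Fin (2 * k) → ZMod 2) := univ.filter (fun x => r ⬝ᵥ x = 1) with hS1
  set S0 : Finset (Fin (2 * k) → ZMod 2) := univ.filter (fun x => ¬ (r ⬝ᵥ x = 1)) with hS0
  have hS0im : S0 = S1.image (· + e) := by
    ext x
    simp only [hS0, hS1, mem_filter, mem_univ, true_and, mem_image]
    constructor
    · intro hx
      refine ⟨x + e, ?_, by rw [add_assoc, hee, add_zero]⟩
      rw [hflip, zmodNe1 _ hx]
      decide
    · rintro ⟨a, ha, rfl⟩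
      rw [hflip, ha]
      decide
  have hcards : S0.card = S1.card := by
    rw [hS0im, Finset.card_image_of_injective _ (add_left_injective e)]
  have htot : S1.card + S0.card = 2 ^ (2 * k) := by
    rw [hS1, hS0, Finset.card_filter_add_card_filter_not]
    rw [Finset.card_univ, Fintype.card_fun, Fintype.card_fin, ZMod.card]
  have hS1card : S1.card + S1.card = 2 ^ (2 * k) := by omega
  have hS1eq : S1 = (univ.filter (fun p : Fin 3 × Fin n => lam p.1 = 1)).image col := by
    ext x
    simp only [hS1, mem_filter, mem_univ, true_and, mem_image]
    constructor
    · intro hx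
      have hx0 : x ≠ 0 := by
        intro h0; rw [h0, dotProduct_zero] at hx; exact (by decide : ¬((0:ZMod 2) = 1)) hx
      obtain ⟨p, hp⟩ := hsurj x hx0
      refine ⟨p, ?_, hp⟩
      rw [← h p, hp]
      exact hx
    · rintro ⟨p, hp1, rfl⟩
      rw [h p, hp1]
  have hfilterprod : (univ.filter (fun p : Fin 3 × Fin n => lam p.1 = 1)) =
      (univ.filter (fun i : Fin 3 => lam i = 1)) ×ˢ univ := by
    ext p; simp [Finset.mem_product]
  have hS1card2 : S1.card = (univ.filter (fun i : Fin 3 => lam i = 1)).card * n := by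
    rw [hS1eq, Finset.card_image_of_injective _ hinj, hfilterprod, Finset.card_product,
      Finset.card_univ, Fintype.card_fin]
  set m := (univ.filter (fun i : Fin 3 => lam i = 1)).card with hm
  have hmle : m ≤ 3 := by
    calc m ≤ (univ : Finset (Fin 3)).card := Finset.card_filter_le _ _
    _ = 3 := by simp
  have hmpos : 0 < m := by
    rcases Nat.eq_zero_or_pos m with h0 | hpos
    · exfalso
      have hfe : (univ.filter (fun i : Fin 3 => lam i = 1)) = ∅ := Finset.card_eq_zero.mp h0
      have hx0 : e ≠ 0 := by
        intro hz
        have := congrFun hz t0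
        simp [he, Pi.single_apply] at this
      obtain ⟨p, hp⟩ := hsurj _ hx0
      have hl : lam p.1 = 1 := by
        rw [← h p, hp, he, dotProduct_single, ht0', mul_one]
      have hmem : p.1 ∈ univ.filter (fun i : Fin 3 => lam i = 1) :=
        Finset.mem_filter.mpr ⟨Finset.mem_univ p.1, hl⟩
      rw [hfe] at hmem
      exact Finset.notMem_empty _ hmem
    · exact hpos
  rw [hS1card2] at hS1card
  interval_cases m <;> omega

private def NN {m n : ℕ} (A B C : Matrix (Fin m) (Fin n) (ZMod 2)) (i : Fin 3) :
    Matrix (Fin m ⊕ Fin 2) ((Fin n × Fin 4) ⊕ Fin 1) (ZMod 2) :=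
  Matrix.of fun r c =>
    match r, c with
    | Sum.inl r, Sum.inl (j, s) => ![A, B, C] (Tt i s) r j
    | Sum.inr r, Sum.inl (_, s) => tg i s r
    | Sum.inl _, Sum.inr _ => 0
    | Sum.inr r, Sum.inr _ => etg i r

open Matrix Finset in
theorem stmt_18 (k n : ℕ) (hk : 1 ≤ k) (hn : 3 * n + 1 = 2 ^ (2 * k))
    (A B C : Matrix (Fin (2 * k)) (Fin n) (ZMod 2))
    (hcols_ne : ∀ (i : Fin 3) (j : Fin n), (fun r => (![A, B, C] i) r j) ≠ 0)
    (hcols_inj : Function.Injective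
      (fun p : Fin 3 × Fin n => fun r => (![A, B, C] p.1) r p.2))
    (hsum : A + B + C = 0)
    (hrank : Function.Surjective
      (fun x : Fin n → ZMod 2 => (A.mulVec x, B.mulVec x))) :
    ∃ Ap Bp Cp : Matrix (Fin (2 * (k + 1))) (Fin (4 * n + 1)) (ZMod 2),
      (∀ (i : Fin 3) (j : Fin (4 * n + 1)), (fun r => (![Ap, Bp, Cp] i) r j) ≠ 0) ∧
      Function.Injective
        (fun p : Fin 3 × Fin (4 * n + 1) => fun r => (![Ap, Bp, Cp] p.1) r p.2) ∧
      Ap + Bp + Cp = 0 ∧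
      Function.Surjective
        (fun x : Fin (4 * n + 1) → ZMod 2 => (Ap.mulVec x, Bp.mulVec x)) := by
  classical
  -- n is at least 2
  have hn0 : n ≠ 0 := by
    intro h0
    subst h0
    have : (2:ℕ)^(2*k) ≥ 2^2 := Nat.pow_le_pow_right (by norm_num) (by omega)
    omega
  have hn1 : n ≠ 1 := by
    intro h1
    subst h1
    have hcard := Fintype.card_le_of_surjective _ hrank
    simp only [Fintype.card_prod, Fintype.card_fun, Fintype.card_fin, ZMod.card] at hcard
    have h4 : (2:ℕ)^(2*k) = 4 := by omega
    rw [h4] at hcard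
    norm_num at hcard
  -- the equivalences
  have hrow : 2 * (k + 1) = 2 * k + 2 := by ring
  have hcol : 4 * n + 1 = n * 4 + 1 := by ring
  set eRow : Fin (2 * (k + 1)) ≃ (Fin (2 * k) ⊕ Fin 2) :=
    (finCongr hrow).trans finSumFinEquiv.symm with heRow
  set eCol : Fin (4 * n + 1) ≃ ((Fin n × Fin 4) ⊕ Fin 1) :=
    (finCongr hcol).trans (finSumFinEquiv.symm.trans
      (Equiv.sumCongr finProdFinEquiv.symm (Equiv.refl _))) with heCol
  set Pp : Fin 3 → Matrix (Fin (2 * (k + 1))) (Fin (4 * n + 1)) (ZMod 2) :=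
    fun i => (NN A B C i).submatrix eRow eCol with hPp
  have hPP : ∀ i : Fin 3, ![Pp 0, Pp 1, Pp 2] i = Pp i := by
    intro i; fin_cases i <;> rfl
  have hCs : ∀ r j, C r j = A r j + B r j := by
    intro r j
    apply zmodSolve3
    have := congrFun (congrFun hsum r) j
    simpa [Matrix.add_apply] using this
  refine ⟨Pp 0, Pp 1, Pp 2, ?_, ?_, ?_, ?_⟩
  · -- nonzero columns
    intro i j
    simp only [hPP]
    intro hz
    have hz' : ∀ z, NN A B C i z (eCol j) = 0 := by
      intro z
      have := congrFun hz (eRow.symm z)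
      simpa [hPp, Matrix.submatrix_apply] using this
    rcases hc : eCol j with ⟨j0, s⟩ | z
    · apply hcols_ne (Tt i s) j0
      funext r
      have := hz' (Sum.inl r)
      rw [hc] at this
      simpa [NN] using this
    · apply etgNe i
      funext r
      have := hz' (Sum.inr r)
      rw [hc] at this
      simpa [NN] using this
  · -- injectivity of columns
    intro p q h
    simp only [hPP] at h
    have h' : ∀ z, NN A B C p.1 z (eCol p.2) = NN A B C q.1 z (eCol q.2) := by
      intro z
      have := congrFun h (eRow.symm z)
      simpa [hPp, Matrix.submatrix_apply] using this
    rcases hcp : eCol p.2 with ⟨j, s⟩ | z1 <;> rcases hcq : eCol q.2 with ⟨j', s'⟩ | z2 <;>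
      rw [hcp, hcq] at h'
    · -- both genuine columns
      have htop : (fun r => (![A, B, C] (Tt p.1 s, j).1) r (Tt p.1 s, j).2) =
          (fun r => (![A, B, C] (Tt q.1 s', j').1) r (Tt q.1 s', j').2) := by
        funext r
        have := h' (Sum.inl r)
        simpa [NN] using this
      have hpair := hcols_inj (a₁ := (Tt p.1 s, j)) (a₂ := (Tt q.1 s', j')) htop
      have hT : Tt p.1 s = Tt q.1 s' := (Prod.mk.injEq _ _ _ _ ▸ hpair).1
      have hj : j = j' := (Prod.mk.injEq _ _ _ _ ▸ hpair).2
      have htag : tg p.1 s = tg q.1 s' := by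
        funext r
        have := h' (Sum.inr r)
        simpa [NN] using this
      obtain ⟨hi, hs⟩ := TtgInj _ _ _ _ hT htag
      have h2 : p.2 = q.2 := by
        apply eCol.injective
        rw [hcp, hcq, hj, hs]
      exact Prod.ext hi h2
    · exfalso
      apply hcols_ne (Tt p.1 s) j
      funext r
      have := h' (Sum.inl r)
      simpa [NN] using this
    · exfalso
      apply hcols_ne (Tt q.1 s') j'
      funext r
      have := (h' (Sum.inl r)).symm
      simpa [NN] using this
    · have hi : p.1 = q.1 := by
        apply etgInj
        funext r
        have := h' (Sum.inr r)
        simpa [NN] using this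
      have h2 : p.2 = q.2 := by
        apply eCol.injective
        rw [hcp, hcq, Subsingleton.elim z1 z2]
      exact Prod.ext hi h2
  · -- sum is zero
    ext r c
    simp only [Matrix.add_apply, Matrix.zero_apply, hPp, Matrix.submatrix_apply]
    rcases eRow r with r' | r' <;> rcases eCol c with ⟨j, s⟩ | z
    · show (![A,B,C] (Tt 0 s)) r' j + (![A,B,C] (Tt 1 s)) r' j + (![A,B,C] (Tt 2 s)) r' j = 0
      rw [TtPermSum (fun b => (![A,B,C] b) r' j) s]
      show A r' j + B r' j + C r' j = 0
      rw [hCs]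
      exact (by decide : ∀ a b : ZMod 2, a + b + (a + b) = 0) _ _
    · show (0 : ZMod 2) + 0 + 0 = 0
      simp
    · exact tgSum s r'
    · exact etgSum r'
  · -- surjectivity
    set St : Matrix ((Fin (2*k) ⊕ Fin 2) ⊕ (Fin (2*k) ⊕ Fin 2)) ((Fin n × Fin 4) ⊕ Fin 1)
        (ZMod 2) := Matrix.fromRows (NN A B C 0) (NN A B C 1) with hSt
    have hdual : ∀ g, Matrix.vecMul g St = 0 → g = 0 := by
      intro g hg
      set r : Fin (2*k) → ZMod 2 := fun t => g (Sum.inl (Sum.inl t)) with hr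
      set α : Fin 2 → ZMod 2 := fun t => g (Sum.inl (Sum.inr t)) with hα
      set r' : Fin (2*k) → ZMod 2 := fun t => g (Sum.inr (Sum.inl t)) with hr'
      set β : Fin 2 → ZMod 2 := fun t => g (Sum.inr (Sum.inr t)) with hβ
      have hcomp : ∀ c, (r ⬝ᵥ (fun t => St (Sum.inl (Sum.inl t)) c))
          + (α ⬝ᵥ (fun t => St (Sum.inl (Sum.inr t)) c))
          + ((r' ⬝ᵥ (fun t => St (Sum.inr (Sum.inl t)) c))
          + (β ⬝ᵥ (fun t => St (Sum.inr (Sum.inr t)) c))) = 0 := by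
        intro c
        have := congrFun hg c
        simp only [Matrix.vecMul, dotProduct, Pi.zero_apply] at this
        rw [Fintype.sum_sum_type] at this
        simp only [Fintype.sum_sum_type] at this
        simpa [dotProduct, hr, hα, hr', hβ, add_assoc] using this
      set colv : Fin 3 → Fin n → (Fin (2*k) → ZMod 2) :=
        fun i j => fun t => (![A,B,C] i) t j with hcolv
      have E : ∀ s j, (r ⬝ᵥ colv (Tt 0 s) j) + (α ⬝ᵥ tg 0 s)
          + ((r' ⬝ᵥ colv (Tt 1 s) j) + (β ⬝ᵥ tg 1 s)) = 0 := by
        intro s j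
        have := hcomp (Sum.inl (j, s))
        simpa [hSt, Matrix.fromRows_apply_inl, Matrix.fromRows_apply_inr, NN, hcolv] using this
      set cc : Fin 4 → ZMod 2 := fun s => (α ⬝ᵥ tg 0 s) + (β ⬝ᵥ tg 1 s) with hcc
      have E' : ∀ j s, (fun i => r ⬝ᵥ colv i j) (Tt 0 s) +
          (fun i => r' ⬝ᵥ colv i j) (Tt 1 s) + cc s = 0 := by
        intro j s
        have := E s j
        simp only [hcc]
        linear_combination this
      have hCv : ∀ j, colv 2 j = colv 0 j + colv 1 j := by
        intro j
        funext t
        simp only [hcolv, Pi.add_apply]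
        show C t j = A t j + B t j
        exact hCs t j
      have hkey : ∀ j : Fin n,
          (∀ i, r ⬝ᵥ colv i j = ![cc 0 + cc 1 + cc 2, cc 0 + cc 3, cc 1 + cc 2 + cc 3] i) ∧
          (∀ i, r' ⬝ᵥ colv i j = ![cc 0 + cc 1 + cc 3, cc 1 + cc 2, cc 0 + cc 2 + cc 3] i) := by
        intro j
        apply keySolve
        · rw [hCv j, dotProduct_add]
        · rw [hCv j, dotProduct_add]
        · exact E' j
      have hrz : r = 0 := by
        apply countLemma hn hn1 (fun p => colv p.1 p.2) hcols_inj
          (fun p => hcols_ne p.1 p.2) r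
          ![cc 0 + cc 1 + cc 2, cc 0 + cc 3, cc 1 + cc 2 + cc 3]
        intro p
        exact (hkey p.2).1 p.1
      have hrz' : r' = 0 := by
        apply countLemma hn hn1 (fun p => colv p.1 p.2) hcols_inj
          (fun p => hcols_ne p.1 p.2) r'
          ![cc 0 + cc 1 + cc 3, cc 1 + cc 2, cc 0 + cc 2 + cc 3]
        intro p
        exact (hkey p.2).2 p.1
      have j0 : Fin n := ⟨0, by omega⟩
      have hccz : ∀ s, cc s = 0 := by
        intro s
        have := E' j0 s
        rw [hrz, hrz'] at this
        simpa [zero_dotProduct] using this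
      have hccz' : ∀ s, (α ⬝ᵥ tg 0 s) + (β ⬝ᵥ tg 1 s) = 0 := by
        intro s; have := hccz s; rwa [hcc] at this
      have hextra : (α ⬝ᵥ etg 0) + (β ⬝ᵥ etg 1) = 0 := by
        have := hcomp (Sum.inr 0)
        rw [hrz, hrz'] at this
        simpa [hSt, Matrix.fromRows_apply_inl, Matrix.fromRows_apply_inr, NN, zero_dotProduct] using this
      obtain ⟨hαz, hβz⟩ := tagSpan α β hccz' hextra
      funext z
      rcases z with (t | t) | (t | t)
      · exact congrFun hrz t
      · exact congrFun hαz t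
      · exact congrFun hrz' t
      · exact congrFun hβz t
    have hSurj := auxSurj St hdual
    intro ⟨a, b⟩
    obtain ⟨y, hy⟩ := hSurj (Sum.elim (a ∘ eRow.symm) (b ∘ eRow.symm))
    refine ⟨y ∘ eCol, ?_⟩
    rw [hSt, Matrix.fromRows_mulVec] at hy
    have hy0 : (NN A B C 0).mulVec y = a ∘ eRow.symm := by
      funext z; exact congrFun hy (Sum.inl z)
    have hy1 : (NN A B C 1).mulVec y = b ∘ eRow.symm := by
      funext z; exact congrFun hy (Sum.inr z)
    have hycomp : (y ∘ eCol) ∘ eCol.symm = y := by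
      funext z; simp
    have hgoal0 : Pp 0 *ᵥ (y ∘ eCol) = a := by
      simp only [hPp, Matrix.submatrix_mulVec_equiv, hycomp]
      rw [hy0]; funext z; simp
    have hgoal1 : Pp 1 *ᵥ (y ∘ eCol) = b := by
      simp only [hPp, Matrix.submatrix_mulVec_equiv, hycomp]
      rw [hy1]; funext z; simp
    exact Prod.ext hgoal0 hgoal1
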